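/- For every integer m ≥ 2 and real σ ≥ 1, ∑_{p=1}^{m} C(m,p) · √((m-p+3)!) · ((p-3)!)^σ ≤ 400 · ((m-2)!)^σ · D^m for some absolute constant D > 0 (one may take any valid explicit D), where (k)! is interpreted as 1 for k < 0. -/

import Mathlib

private lemma fact_three_step (n : ℕ) :
    (n + 3).factorial = (n + 3) * (n + 2) * (n + 1) * n.factorial := by
  simp [Nat.factorial_succ]; ring

private lemma nat_key {m p : ℕ} (hm : 2 ≤ m) (hp1 : 1 ≤ p) (hpm : p ≤ m) :
    m.choose p * (m - p + 3).factorial * (p - 3).factorial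
      ≤ (m - 2).factorial * (m * m * ((m + 3) * (m + 3) * (m + 3))) := by
  have h1 : (m - p + 3).factorial ≤ (m + 3) * (m + 3) * (m + 3) * (m - p).factorial := by
    rw [fact_three_step]
    gcongr <;> omega
  have h2 : (p - 3).factorial ≤ p.factorial := Nat.factorial_le (by omega)
  have h4 : m.factorial ≤ m * m * (m - 2).factorial := by
    obtain ⟨k, rfl⟩ : ∃ k, m = k + 2 := ⟨m - 2, by omega⟩
    have e : (k + 2).factorial = (k + 2) * ((k + 1) * k.factorial) := rfl
    have hk : 0 < k.factorial := Nat.factorial_pos k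
    simp only [Nat.add_sub_cancel, e]
    nlinarith
  calc m.choose p * (m - p + 3).factorial * (p - 3).factorial
      ≤ m.choose p * ((m + 3) * (m + 3) * (m + 3) * (m - p).factorial) * p.factorial := by
        gcongr
    _ = (m + 3) * (m + 3) * (m + 3) * (m.choose p * p.factorial * (m - p).factorial) := by
        ring
    _ = (m + 3) * (m + 3) * (m + 3) * m.factorial := by
        rw [Nat.choose_mul_factorial_mul_factorial hpm]
    _ ≤ (m + 3) * (m + 3) * (m + 3) * (m * m * (m - 2).factorial) := by gcongr
    _ = (m - 2).factorial * (m * m * ((m + 3) * (m + 3) * (m + 3))) := by ring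

private lemma nat_growth {m : ℕ} (hm : 2 ≤ m) :
    m * (m * m * ((m + 3) * (m + 3) * (m + 3))) ≤ 400 * 64 ^ m := by
  have h1 : m ≤ 2 ^ m := Nat.le_of_lt (Nat.lt_two_pow_self (n := m))
  have h4 : 4 ≤ 2 ^ m := by
    calc 4 = 2 ^ 2 := rfl
    _ ≤ 2 ^ m := Nat.pow_le_pow_right (by norm_num) hm
  have h2 : m + 3 ≤ 2 * 2 ^ m := by omega
  calc m * (m * m * ((m + 3) * (m + 3) * (m + 3)))
      ≤ 2 ^ m * (2 ^ m * 2 ^ m * ((2 * 2 ^ m) * (2 * 2 ^ m) * (2 * 2 ^ m))) := by gcongr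
    _ = 8 * (2 ^ m) ^ 6 := by ring
    _ ≤ 400 * (2 ^ m) ^ 6 := by gcongr; norm_num
    _ = 400 * 64 ^ m := by
        rw [← pow_mul, mul_comm m 6, pow_mul]; norm_num

theorem sum_binom_sqrt_factorial_bound :
    ∃ D > 0, ∀ (m : ℕ) (σ : ℝ), 2 ≤ m → 1 ≤ σ →
      ∑ p ∈ Finset.Icc 1 m,
          (m.choose p : ℝ) * Real.sqrt ((m - p + 3).factorial : ℝ) *
            ((p - 3).factorial : ℝ) ^ σ ≤
        400 * ((m - 2).factorial : ℝ) ^ σ * D ^ m := by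
  refine ⟨64, by norm_num, ?_⟩
  intro m σ hm hσ
  set b : ℝ := ((m - 2).factorial : ℝ) with hb
  have hb0 : (0 : ℝ) < b := by
    rw [hb]; exact_mod_cast Nat.factorial_pos (m - 2)
  have hbσ : b ^ σ = b * b ^ (σ - 1) := by
    nth_rewrite 1 [show σ = 1 + (σ - 1) by ring]
    rw [Real.rpow_add hb0, Real.rpow_one]
  set C : ℝ := (m : ℝ) * m * ((m + 3) * (m + 3) * (m + 3)) with hC
  have key : ∀ p ∈ Finset.Icc 1 m,
      (m.choose p : ℝ) * Real.sqrt ((m - p + 3).factorial : ℝ) *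
        ((p - 3).factorial : ℝ) ^ σ ≤ b ^ σ * C := by
    intro p hp
    rw [Finset.mem_Icc] at hp
    obtain ⟨hp1, hpm⟩ := hp
    have ha0 : (0 : ℝ) < ((p - 3).factorial : ℝ) := by
      exact_mod_cast Nat.factorial_pos (p - 3)
    have ha1 : (1 : ℝ) ≤ ((m - p + 3).factorial : ℝ) := by
      exact_mod_cast Nat.one_le_iff_ne_zero.mpr (Nat.factorial_pos (m - p + 3)).ne'
    have hab : ((p - 3).factorial : ℝ) ≤ b := by
      rw [hb]; exact_mod_cast Nat.factorial_le (by omega : p - 3 ≤ m - 2)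
    have hs : Real.sqrt ((m - p + 3).factorial : ℝ) ≤ ((m - p + 3).factorial : ℝ) :=
      Real.sqrt_le_iff.mpr ⟨by positivity, by nlinarith⟩
    have hrp : ((p - 3).factorial : ℝ) ^ σ ≤
        ((p - 3).factorial : ℝ) * b ^ (σ - 1) := by
      have e : ((p - 3).factorial : ℝ) ^ σ =
          ((p - 3).factorial : ℝ) * ((p - 3).factorial : ℝ) ^ (σ - 1) := by
        nth_rewrite 1 [show σ = 1 + (σ - 1) by ring]
        rw [Real.rpow_add ha0, Real.rpow_one]
      rw [e]
      exact mul_le_mul_of_nonneg_left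
        (Real.rpow_le_rpow ha0.le hab (by linarith)) ha0.le
    calc (m.choose p : ℝ) * Real.sqrt ((m - p + 3).factorial : ℝ) *
          ((p - 3).factorial : ℝ) ^ σ
        ≤ (m.choose p : ℝ) * ((m - p + 3).factorial : ℝ) *
          (((p - 3).factorial : ℝ) * b ^ (σ - 1)) := by
          apply mul_le_mul _ hrp (by positivity) (by positivity)
          exact mul_le_mul_of_nonneg_left hs (by positivity)
      _ = ((m.choose p * (m - p + 3).factorial * (p - 3).factorial : ℕ) : ℝ) *
          b ^ (σ - 1) := by push_cast; ring
      _ ≤ (((m - 2).factorial * (m * m * ((m + 3) * (m + 3) * (m + 3))) : ℕ) : ℝ) *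
          b ^ (σ - 1) := by
          refine mul_le_mul_of_nonneg_right ?_ (Real.rpow_nonneg hb0.le _)
          exact_mod_cast nat_key hm hp1 hpm
      _ = b ^ σ * C := by
          rw [hbσ]; push_cast [hC, hb]; ring
  calc ∑ p ∈ Finset.Icc 1 m,
        (m.choose p : ℝ) * Real.sqrt ((m - p + 3).factorial : ℝ) *
          ((p - 3).factorial : ℝ) ^ σ
      ≤ (Finset.Icc 1 m).card • (b ^ σ * C) := Finset.sum_le_card_nsmul _ _ _ key
    _ = (m : ℝ) * (b ^ σ * C) := by
        rw [Nat.card_Icc]; simp [nsmul_eq_mul]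
    _ = b ^ σ * ((m : ℝ) * C) := by ring
    _ ≤ b ^ σ * (400 * 64 ^ m) := by
        refine mul_le_mul_of_nonneg_left ?_ (Real.rpow_nonneg hb0.le _)
        rw [hC]
        exact_mod_cast nat_growth hm
    _ = 400 * b ^ σ * 64 ^ m := by ring
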